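/- Let P and Q be probability distributions on a finite set Ω with Q(x) > 0 for all x, and suppose e^{−ε} ≤ P(x)/Q(x) ≤ e^{ε} for all x. Then the KL divergence satisfies D(P‖Q) = Σ_x P(x) log(P(x)/Q(x)) ≤ (1/2)ε². -/

import Mathlib

lemma sinh_le_mul_cosh_aux {x : ℝ} (hx : 0 ≤ x) : Real.sinh x ≤ x * Real.cosh x := by
  have hmono : MonotoneOn (fun y => y * Real.cosh y - Real.sinh y) (Set.Ici 0) := by
    apply monotoneOn_of_deriv_nonneg (convex_Ici 0)
    · exact ((continuous_id.mul Real.continuous_cosh).sub Real.continuous_sinh).continuousOn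
    · intro y _
      exact (((hasDerivAt_id y).mul (Real.hasDerivAt_cosh y)).sub
        (Real.hasDerivAt_sinh y)).differentiableAt.differentiableWithinAt
    · intro y hy
      rw [interior_Ici, Set.mem_Ioi] at hy
      have hD : HasDerivAt (fun y => y * Real.cosh y - Real.sinh y)
          (1 * Real.cosh y + y * Real.sinh y - Real.cosh y) y :=
        ((hasDerivAt_id y).mul (Real.hasDerivAt_cosh y)).sub (Real.hasDerivAt_sinh y)
      rw [hD.deriv]
      have : 0 ≤ y * Real.sinh y := mul_nonneg hy.le (Real.sinh_nonneg_iff.2 hy.le)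
      linarith
  have h0 := hmono (Set.mem_Ici.2 le_rfl) (Set.mem_Ici.2 hx) hx
  simp only [Real.sinh_zero, Real.cosh_zero] at h0
  linarith

lemma tanh_half_aux (ε : ℝ) (hε : 0 ≤ ε) :
    2 * (Real.exp ε + Real.exp (-ε) - 2) ≤ ε * (Real.exp ε - Real.exp (-ε)) := by
  have hyn : 0 ≤ ε / 2 := by linarith
  have h1 : Real.sinh (ε / 2) ≤ (ε / 2) * Real.cosh (ε / 2) := sinh_le_mul_cosh_aux hyn
  rw [Real.sinh_eq, Real.cosh_eq] at h1
  have huv : Real.exp (ε / 2) * Real.exp (-(ε / 2)) = 1 := by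
    rw [← Real.exp_add]; simp
  have hu : Real.exp ε = Real.exp (ε / 2) * Real.exp (ε / 2) := by
    rw [← Real.exp_add]; ring_nf
  have hv : Real.exp (-ε) = Real.exp (-(ε / 2)) * Real.exp (-(ε / 2)) := by
    rw [← Real.exp_add]; ring_nf
  have h0 : Real.exp (-(ε / 2)) ≤ Real.exp (ε / 2) := Real.exp_le_exp.2 (by linarith)
  rw [hu, hv]
  nlinarith [mul_le_mul_of_nonneg_left h1 (sub_nonneg.2 h0)]

theorem kl_le_of_pure_dp {Ω : Type*} [Fintype Ω] (P Q : Ω → ℝ) (ε : ℝ) (hε : 0 < ε)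
    (hP : ∀ x, 0 ≤ P x) (hQ : ∀ x, 0 < Q x)
    (hPsum : ∑ x, P x = 1) (hQsum : ∑ x, Q x = 1)
    (hlo : ∀ x, Real.exp (-ε) ≤ P x / Q x) (hhi : ∀ x, P x / Q x ≤ Real.exp ε) :
    ∑ x, P x * Real.log (P x / Q x) ≤ (1 / 2) * ε ^ 2 := by
  set a := Real.exp ε with ha
  set b := Real.exp (-ε) with hb
  have hab : a * b = 1 := by rw [ha, hb, ← Real.exp_add]; simp
  have hba : b < a := Real.exp_lt_exp.2 (by linarith)
  have hd : 0 < a - b := by linarith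
  have hbpos : 0 < b := Real.exp_pos _
  have hapos : 0 < a := Real.exp_pos _
  have hloga : Real.log a = ε := by rw [ha, Real.log_exp]
  have hlogb : Real.log b = -ε := by rw [hb, Real.log_exp]
  have key : ∀ x, P x * Real.log (P x / Q x) ≤
      (ε * (a + b) / (a - b)) * P x + (-2 * ε / (a - b)) * Q x := by
    intro x
    set t := P x / Q x with ht
    have hQx := hQ x
    have htb : b ≤ t := hlo x
    have hta : t ≤ a := hhi x
    have hPt : P x = t * Q x := by rw [ht]; field_simp
    have hl : 0 ≤ (a - t) / (a - b) := div_nonneg (by linarith) hd.le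
    have hm : 0 ≤ (t - b) / (a - b) := div_nonneg (by linarith) hd.le
    have hs : (a - t) / (a - b) + (t - b) / (a - b) = 1 := by field_simp; ring
    have hconv := Real.convexOn_mul_log.2 (Set.mem_Ici.2 hbpos.le)
      (Set.mem_Ici.2 hapos.le) hl hm hs
    have hcomb : ((a - t) / (a - b)) • b + ((t - b) / (a - b)) • a = t := by
      simp only [smul_eq_mul]; field_simp; ring
    rw [hcomb] at hconv
    simp only [smul_eq_mul, hloga, hlogb] at hconv
    have h2 : t * Real.log t ≤ (ε * (a + b) / (a - b)) * t + (-2 * ε / (a - b)) := by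
      have heq : (a - t) / (a - b) * (b * -ε) + (t - b) / (a - b) * (a * ε)
          = (ε * (a + b) / (a - b)) * t + (-2 * ε / (a - b)) := by
        field_simp
        linear_combination (-2) * hab
      linarith [hconv, heq.ge, heq.le]
    have h3 := mul_le_mul_of_nonneg_left h2 hQx.le
    calc P x * Real.log t = Q x * (t * Real.log t) := by rw [hPt]; ring
      _ ≤ Q x * ((ε * (a + b) / (a - b)) * t + (-2 * ε / (a - b))) := h3
      _ = (ε * (a + b) / (a - b)) * P x + (-2 * ε / (a - b)) * Q x := by rw [hPt]; ring
  have hsum : ∑ x, P x * Real.log (P x / Q x) ≤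
      ∑ x, ((ε * (a + b) / (a - b)) * P x + (-2 * ε / (a - b)) * Q x) :=
    Finset.sum_le_sum fun x _ => key x
  rw [Finset.sum_add_distrib, ← Finset.mul_sum, ← Finset.mul_sum, hPsum, hQsum] at hsum
  have htanh := tanh_half_aux ε hε.le
  have hfin : ε * (a + b) / (a - b) * 1 + -2 * ε / (a - b) * 1 ≤ 1 / 2 * ε ^ 2 := by
    rw [mul_one, mul_one]
    rw [← add_div, div_le_iff₀ hd]
    nlinarith [htanh]
  linarith
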